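/- Suppose {a_n}_{n=0}^∞ is a Stieltjes moment sequence with representing measure μ, κ is an integer ≥ 2, {a_n^{1/κ}}_{n=0}^∞ is a Stieltjes moment sequence with representing measure ν, μ((θ1,θ2)) = 0 for some real θ1, θ2 with 0 ≤ θ1 < θ2, and θ2 ≤ θ3 := sup supp μ < ∞. Set α = (θ1/θ3)·θ3^{1/κ}, β = θ2^{1/κ}, γ = θ3^{1/κ}, α† = (θ2/θ3)·θ3^{1/κ}, β† = θ1^{1/κ}. If either (a) β† < α†, or β† ≤ α† and κ ≥ 3, or β† = α† and β ∈ supp ν; or (b) (γ/β)·α < α† and β ∈ supp ν; then ν((α,β)) = 0. -/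

import Mathlib

open MeasureTheory

/-- The closed support of a Borel measure: the set of points all of whose open
neighbourhoods have positive measure. -/
def msupport {X : Type*} [TopologicalSpace X] [MeasurableSpace X] (μ : Measure X) : Set X :=
  {x | ∀ U : Set X, IsOpen U → x ∈ U → 0 < μ U}

/-- `μ` is a representing measure (on `[0,∞)`, modelled as a measure on `ℝ` vanishing on
`(-∞,0)`) of the Stieltjes moment sequence `a`. -/
def IsRepMeas (a : ℕ → ℝ) (μ : Measure ℝ) : Prop :=
  (∀ n, 0 ≤ a n) ∧ μ (Set.Iio 0) = 0 ∧
    ∀ n : ℕ, ∫⁻ x, ENNReal.ofReal (x ^ n) ∂μ = ENNReal.ofReal (a n)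

/-- `a` is a Stieltjes moment sequence. -/
def IsStieltjes (a : ℕ → ℝ) : Prop :=
  ∃ μ : Measure ℝ, IsRepMeas a μ

/-- A Stieltjes moment sequence is determinate if it has a unique representing measure. -/
def IsDeterminate (a : ℕ → ℝ) : Prop :=
  ∀ μ ν : Measure ℝ, IsRepMeas a μ → IsRepMeas a ν → μ = ν

open Set
open scoped ENNReal

set_option maxHeartbeats 1000000

section Aux

lemma msupport_compl_null (m : Measure ℝ) : m (msupport m)ᶜ = 0 := by
  set S : Set (Set ℝ) := {U | IsOpen U ∧ m U = 0} with hSdef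
  obtain ⟨T, hTc, hTS, hT⟩ := TopologicalSpace.isOpen_sUnion_countable S (fun s hs => hs.1)
  have hsub : (msupport m)ᶜ ⊆ ⋃₀ S := by
    intro x hx
    simp only [msupport, mem_compl_iff, mem_setOf_eq, not_forall] at hx
    obtain ⟨U, hU, hxU, hm⟩ := hx
    exact ⟨U, ⟨hU, le_zero_iff.mp (not_lt.mp hm)⟩, hxU⟩
  refine measure_mono_null hsub ?_
  rw [← hT]
  exact (measure_sUnion_null_iff hTc).2 (fun s hs => (hTS hs).2)

lemma exists_mem_msupport {m : Measure ℝ} {E : Set ℝ} (h : m E ≠ 0) :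
    ∃ x ∈ E, x ∈ msupport m := by
  by_contra hc
  push_neg at hc
  exact h (measure_mono_null (fun x hx => hc x hx) (msupport_compl_null m))

lemma null_compl_of_msupport_subset {m : Measure ℝ} {E : Set ℝ} (h : msupport m ⊆ E) :
    m Eᶜ = 0 :=
  measure_mono_null (compl_subset_compl.mpr h) (msupport_compl_null m)

lemma isLUB_mem_msupport {m : Measure ℝ} {c : ℝ} (h : IsLUB (msupport m) c) :
    c ∈ msupport m := by
  by_contra hc
  simp only [msupport, mem_setOf_eq, not_forall] at hc
  obtain ⟨U, hU, hcU, hm0⟩ := hc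
  have hm0 : m U = 0 := le_zero_iff.mp (not_lt.mp hm0)
  obtain ⟨ε, hε, hball⟩ := Metric.isOpen_iff.mp hU c hcU
  have hub : c - ε ∈ upperBounds (msupport m) := by
    intro y hy
    by_contra hy2
    push_neg at hy2
    have hyc : y ≤ c := h.1 hy
    have hyb : y ∈ Metric.ball c ε := by
      rw [Real.ball_eq_Ioo]
      exact ⟨by linarith, by linarith⟩
    have := hy U hU (hball hyb)
    simp [hm0] at this
  have := h.2 hub
  linarith

lemma moment_upper {m : Measure ℝ} {R : ℝ} (hconc : m (Icc 0 R)ᶜ = 0) (n : ℕ) :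
    ∫⁻ x, ENNReal.ofReal (x ^ n) ∂m ≤ ENNReal.ofReal (R ^ n) * m univ := by
  have hae : ∀ᵐ x ∂m, x ∈ Icc 0 R := by
    rw [ae_iff]
    exact hconc
  calc ∫⁻ x, ENNReal.ofReal (x ^ n) ∂m
      ≤ ∫⁻ _, ENNReal.ofReal (R ^ n) ∂m := by
        refine lintegral_mono_ae (hae.mono fun x hx => ?_)
        exact ENNReal.ofReal_le_ofReal (pow_le_pow_left₀ hx.1 hx.2 n)
    _ = ENNReal.ofReal (R ^ n) * m univ := lintegral_const _

lemma moment_lower {m : Measure ℝ} {c : ℝ} (hc : 0 ≤ c) {A : Set ℝ}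
    (hA2 : A ⊆ Ici c) (n : ℕ) :
    ENNReal.ofReal (c ^ n) * m A ≤ ∫⁻ x, ENNReal.ofReal (x ^ n) ∂m := by
  calc ENNReal.ofReal (c ^ n) * m A
      = ∫⁻ _ in A, ENNReal.ofReal (c ^ n) ∂m := (setLIntegral_const A _).symm
    _ ≤ ∫⁻ x in A, ENNReal.ofReal (x ^ n) ∂m := by
        refine setLIntegral_mono (by measurability) fun x hx => ?_
        exact ENNReal.ofReal_le_ofReal (pow_le_pow_left₀ hc (hA2 hx) n)
    _ ≤ ∫⁻ x, ENNReal.ofReal (x ^ n) ∂m := setLIntegral_le_lintegral _ _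

lemma geom_contra {c d M δ : ℝ} (hd : 0 ≤ d) (hdc : d < c) (hδ : 0 < δ)
    (h : ∀ n : ℕ, δ * c ^ n ≤ M * d ^ n) : False := by
  have hc : 0 < c := lt_of_le_of_lt hd hdc
  rcases eq_or_lt_of_le hd with h0 | h0
  · have h1 := h 1
    rw [← h0] at h1
    simp at h1
    nlinarith [mul_pos hδ hc]
  · have hM : 0 < M := by
      have h0' := h 0
      simp at h0'
      linarith
    obtain ⟨n, hn⟩ := pow_unbounded_of_one_lt (M / δ) ((one_lt_div h0).mpr hdc)
    have hn' := h n
    rw [div_pow, div_lt_div_iff₀ hδ (pow_pos h0 n)] at hn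
    nlinarith
  
lemma geom_exists {r1 r2 M δ : ℝ} (h1 : 0 ≤ r1) (h12 : r1 < r2) (hδ : 0 < δ) :
    ∃ n : ℕ, M * r1 ^ n < δ * r2 ^ n := by
  by_contra hc
  push_neg at hc
  exact geom_contra h1 h12 hδ hc

lemma ennreal_mul_le {x y : ℝ} {S : ℝ≥0∞} (hS : S ≠ ⊤) (hy : 0 ≤ y) (hx : 0 ≤ x)
    (h : ENNReal.ofReal x * S ≤ ENNReal.ofReal y) : x * S.toReal ≤ y := by
  have hfin : ENNReal.ofReal y ≠ ⊤ := ENNReal.ofReal_ne_top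
  have := ENNReal.toReal_mono hfin h
  rwa [ENNReal.toReal_mul, ENNReal.toReal_ofReal hx, ENNReal.toReal_ofReal hy] at this

lemma ennreal_le_mul {x y : ℝ} {S : ℝ≥0∞} (hS : S ≠ ⊤) (hy : 0 ≤ y)
    (h : ENNReal.ofReal x ≤ ENNReal.ofReal y * S) : x ≤ y * S.toReal := by
  rcases le_or_gt x 0 with hx | hx
  · exact le_trans hx (by positivity)
  · have hfin : ENNReal.ofReal y * S ≠ ⊤ := ENNReal.mul_ne_top ENNReal.ofReal_ne_top hS
    have := ENNReal.toReal_mono hfin h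
    rwa [ENNReal.toReal_mul, ENNReal.toReal_ofReal hx.le, ENNReal.toReal_ofReal hy] at this

end Aux

section ProdIter

noncomputable def prodIter (ν : Measure ℝ) [SFinite ν] : ℕ → Measure ℝ
  | 0 => Measure.dirac 1
  | (j+1) => Measure.map (fun p : ℝ × ℝ => p.1 * p.2) ((prodIter ν j).prod ν)

lemma hmul_meas : Measurable (fun p : ℝ × ℝ => p.1 * p.2) :=
  measurable_fst.mul measurable_snd

lemma meas_ofReal_pow (n : ℕ) : Measurable fun x : ℝ => ENNReal.ofReal x ^ n :=
  measurable_id.ennreal_ofReal.pow_const n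

lemma prodIter_univ (ν : Measure ℝ) [SFinite ν] : ∀ j, prodIter ν j univ = ν univ ^ j
  | 0 => by simp [prodIter]
  | (j+1) => by
      rw [prodIter, Measure.map_apply hmul_meas MeasurableSet.univ, preimage_univ,
        ← univ_prod_univ, Measure.prod_prod, prodIter_univ ν j, pow_succ]

lemma prodIter_conc {ν : Measure ℝ} [SFinite ν] {R : ℝ} (hR : 0 ≤ R)
    (hc : ν (Icc 0 R)ᶜ = 0) : ∀ j, prodIter ν j ((Icc 0 (R ^ j))ᶜ) = 0
  | 0 => by
      rw [prodIter, Measure.dirac_apply' _ measurableSet_Icc.compl]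
      simp
  | (j+1) => by
      have ih := prodIter_conc hR hc j
      rw [prodIter, Measure.map_apply hmul_meas measurableSet_Icc.compl]
      refine measure_mono_null (t := ((Icc 0 (R ^ j))ᶜ ×ˢ univ) ∪ (univ ×ˢ (Icc 0 R)ᶜ)) ?_ ?_
      · rintro ⟨x, y⟩ hxy
        simp only [mem_preimage, mem_compl_iff] at hxy
        by_contra hcon
        simp only [mem_union, mem_prod, mem_compl_iff, mem_univ, and_true, true_and,
          not_or, not_not] at hcon
        refine hxy ?_
        rw [pow_succ]
        exact ⟨mul_nonneg hcon.1.1 hcon.2.1,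
          mul_le_mul hcon.1.2 hcon.2.2 hcon.2.1 (pow_nonneg hR j)⟩
      · refine measure_union_null ?_ ?_ <;> rw [Measure.prod_prod]
        · rw [ih, zero_mul]
        · rw [hc, mul_zero]

lemma prodIter_neg {ν : Measure ℝ} [SFinite ν] {R : ℝ} (hR : 0 ≤ R)
    (hc : ν (Icc 0 R)ᶜ = 0) (j : ℕ) : prodIter ν j (Iio 0) = 0 := by
  refine measure_mono_null (fun x hx => ?_) (prodIter_conc hR hc j)
  simp only [mem_Iio] at hx
  simp only [mem_compl_iff, mem_Icc, not_and_or, not_le]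
  exact Or.inl hx

lemma prodIter_lintegral {ν : Measure ℝ} [SFinite ν] (hν0 : ν (Iio 0) = 0) (n : ℕ) :
    ∀ j, ∫⁻ x, ENNReal.ofReal x ^ n ∂(prodIter ν j) = (∫⁻ x, ENNReal.ofReal x ^ n ∂ν) ^ j
  | 0 => by
      rw [prodIter, lintegral_dirac]
      simp
  | (j+1) => by
      have ih := prodIter_lintegral hν0 n j
      rw [prodIter, lintegral_map (meas_ofReal_pow n) hmul_meas]
      have hae : ∀ᵐ p : ℝ × ℝ ∂((prodIter ν j).prod ν),
          ENNReal.ofReal (p.1 * p.2) ^ n = ENNReal.ofReal p.1 ^ n * ENNReal.ofReal p.2 ^ n := by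
        rw [ae_iff]
        refine measure_mono_null (t := (univ : Set ℝ) ×ˢ Iio 0) (fun p hp => ?_) ?_
        · simp only [mem_setOf_eq] at hp
          by_contra hcon
          simp only [mem_prod, mem_univ, true_and, mem_Iio, not_lt] at hcon
          exact hp (by rw [ENNReal.ofReal_mul' hcon, mul_pow])
        · rw [Measure.prod_prod, hν0, mul_zero]
      rw [lintegral_congr_ae hae]
      have hpm := lintegral_prod_mul (μ := prodIter ν j) (ν := ν)
        (f := fun x : ℝ => ENNReal.ofReal x ^ n) (g := fun x : ℝ => ENNReal.ofReal x ^ n)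
        (meas_ofReal_pow n).aemeasurable (meas_ofReal_pow n).aemeasurable
      exact hpm.trans (by rw [ih, pow_succ])

lemma prodIter_pos {ν : Measure ℝ} [SFinite ν] :
    ∀ (l : List ℝ), (∀ x ∈ l, x ∈ msupport ν) →
      ∀ U : Set ℝ, IsOpen U → l.prod ∈ U → 0 < prodIter ν l.length U
  | [], _, U, hU, hmem => by
      simp only [List.prod_nil] at hmem
      rw [List.length_nil, prodIter, Measure.dirac_apply' _ hU.measurableSet]
      simp [hmem]
  | (x :: t), hl, U, hU, hmem => by
      rw [List.length_cons, prodIter,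
        Measure.map_apply hmul_meas hU.measurableSet]
      have hopen : IsOpen ((fun p : ℝ × ℝ => p.1 * p.2) ⁻¹' U) :=
        hU.preimage (by continuity)
      have hpt : ((t.prod, x) : ℝ × ℝ) ∈ (fun p : ℝ × ℝ => p.1 * p.2) ⁻¹' U := by
        simp only [mem_preimage]
        rw [mul_comm]
        simpa [List.prod_cons] using hmem
      obtain ⟨V, W, hV, hW, hVmem, hWmem, hVW⟩ := isOpen_prod_iff.mp hopen _ _ hpt
      have h1 : 0 < prodIter ν t.length V :=
        prodIter_pos t (fun y hy => hl y (List.mem_cons_of_mem _ hy)) V hV hVmem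
      have h2 : 0 < ν W := hl x List.mem_cons_self W hW hWmem
      calc (0 : ℝ≥0∞) < prodIter ν t.length V * ν W := ENNReal.mul_pos h1.ne' h2.ne'
        _ = ((prodIter ν t.length).prod ν) (V ×ˢ W) := (Measure.prod_prod V W).symm
        _ ≤ _ := measure_mono hVW

end ProdIter

set_option maxHeartbeats 1000000

section Bridge

lemma lint_pow_eq {m : Measure ℝ} (h0 : m (Iio 0) = 0) (n : ℕ) :
    ∫⁻ x, ENNReal.ofReal x ^ n ∂m = ∫⁻ x, ENNReal.ofReal (x ^ n) ∂m := by
  refine lintegral_congr_ae ?_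
  rw [Filter.EventuallyEq, ae_iff]
  refine measure_mono_null (t := Iio 0) (fun x hx => ?_) h0
  simp only [mem_setOf_eq] at hx
  by_contra hcon
  simp only [mem_Iio, not_lt] at hcon
  exact hx (ENNReal.ofReal_pow hcon n).symm

lemma integral_pow_eq {m : Measure ℝ} {c : ℕ → ℝ} (hc : ∀ n, 0 ≤ c n) (h0 : m (Iio 0) = 0)
    (hm : ∀ n, ∫⁻ x, ENNReal.ofReal (x ^ n) ∂m = ENNReal.ofReal (c n)) (n : ℕ) :
    ∫ x, x ^ n ∂m = c n := by
  have hae : 0 ≤ᵐ[m] fun x : ℝ => x ^ n := by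
    rw [Filter.EventuallyLE, ae_iff]
    refine measure_mono_null (t := Iio 0) (fun x hx => ?_) h0
    simp only [Pi.zero_apply, mem_setOf_eq, not_le] at hx
    simp only [mem_Iio]
    by_contra hcon
    push_neg at hcon
    exact absurd hx (not_lt.mpr (pow_nonneg hcon n))
  rw [integral_eq_lintegral_of_nonneg_ae hae
    ((measurable_id.pow_const n).aestronglyMeasurable), hm n,
    ENNReal.toReal_ofReal (hc n)]

lemma ae_mem_Icc {m : Measure ℝ} {R : ℝ} (hconc : m (Icc 0 R)ᶜ = 0) :
    ∀ᵐ x ∂m, x ∈ Icc 0 R := by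
  rw [ae_iff]; exact hconc

lemma integrable_poly {m : Measure ℝ} [IsFiniteMeasure m] {R : ℝ}
    (hconc : m (Icc 0 R)ᶜ = 0) (p : Polynomial ℝ) :
    Integrable (fun x => p.eval x) m := by
  obtain ⟨C, hC⟩ := (isCompact_Icc (a := (0:ℝ)) (b := R)).exists_bound_of_continuousOn
    p.continuous_aeval.continuousOn
  refine Integrable.mono' (integrable_const C) p.continuous_aeval.measurable.aestronglyMeasurable
    ((ae_mem_Icc hconc).mono fun x hx => ?_)
  simpa using hC x hx

lemma integral_poly_eq {m1 m2 : Measure ℝ} [IsFiniteMeasure m1] [IsFiniteMeasure m2] {R : ℝ}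
    (hconc1 : m1 (Icc 0 R)ᶜ = 0) (hconc2 : m2 (Icc 0 R)ᶜ = 0)
    (hmom : ∀ n : ℕ, ∫ x, x ^ n ∂m1 = ∫ x, x ^ n ∂m2) (p : Polynomial ℝ) :
    ∫ x, p.eval x ∂m1 = ∫ x, p.eval x ∂m2 := by
  induction p using Polynomial.induction_on' with
  | add p q hp hq =>
      have h1p := integrable_poly hconc1 p
      have h1q := integrable_poly hconc1 q
      have h2p := integrable_poly hconc2 p
      have h2q := integrable_poly hconc2 q
      simp only [Polynomial.eval_add]
      rw [integral_add h1p h1q, integral_add h2p h2q, hp, hq]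
  | monomial k a =>
      simp only [Polynomial.eval_monomial]
      rw [integral_const_mul, integral_const_mul, hmom k]

lemma mem_msupport_of_moments (μ ρ : Measure ℝ) [IsFiniteMeasure μ] [IsFiniteMeasure ρ]
    {R : ℝ} (hR : 0 < R)
    (hconcμ : μ (Icc 0 R)ᶜ = 0) (hconcρ : ρ (Icc 0 R)ᶜ = 0)
    (hmom : ∀ n : ℕ, ∫ x, x ^ n ∂μ = ∫ x, x ^ n ∂ρ)
    {z : ℝ} (hz : z ∈ Icc 0 R)
    (hρ : ∀ U : Set ℝ, IsOpen U → z ∈ U → 0 < ρ U) :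
    z ∈ msupport μ := by
  intro U hU hzU
  obtain ⟨ε0, hε0, hball⟩ := Metric.isOpen_iff.mp hU z hzU
  set η := min ε0 R with hηdef
  have hη : 0 < η := lt_min hε0 hR
  have hηR : η ≤ R := min_le_right _ _
  by_contra hμU
  have hμU0 : μ U = 0 := le_zero_iff.mp (not_lt.mp hμU)
  have hhole : μ (Ioo (z - η) (z + η)) = 0 := by
    refine measure_mono_null (fun x hx => hball ?_) hμU0
    rw [Real.ball_eq_Ioo]
    simp only [mem_Ioo] at hx ⊢
    have hε : η ≤ ε0 := min_le_left _ _
    exact ⟨by linarith [hx.1], by linarith [hx.2]⟩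
  have hδ : 0 < ρ (Ioo (z - η/2) (z + η/2)) :=
    hρ _ isOpen_Ioo ⟨by linarith, by linarith⟩
  set δr := (ρ (Ioo (z - η/2) (z + η/2))).toReal with hδrdef
  have hδr : 0 < δr :=
    ENNReal.toReal_pos hδ.ne' (measure_ne_top _ _)
  set g : ℝ → ℝ := fun x => 1 - ((x - z) * R⁻¹) ^ 2 with hg
  set r1 : ℝ := 1 - (η * R⁻¹) ^ 2 with hr1
  set r2 : ℝ := 1 - (η/2 * R⁻¹) ^ 2 with hr2
  have hRinv : 0 < R⁻¹ := inv_pos.mpr hR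
  have hr1nn : 0 ≤ r1 := by
    have h1 : 0 ≤ η * R⁻¹ := by positivity
    have h2 : η * R⁻¹ ≤ 1 := by
      rw [← div_eq_mul_inv, div_le_one hR]; exact hηR
    rw [hr1]; nlinarith
  have hr12 : r1 < r2 := by
    rw [hr1, hr2]
    have h1 : (0:ℝ) < η * R⁻¹ := by positivity
    nlinarith
  have hgK : ∀ x ∈ Icc 0 R, 0 ≤ g x := by
    intro x hx
    have h1 : -R ≤ x - z := by have := hz.2; have := hx.1; linarith
    have h2 : x - z ≤ R := by have := hz.1; have := hx.2; linarith
    have : ((x - z) * R⁻¹) ^ 2 ≤ 1 := by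
      rw [mul_pow]
      have : (x - z) ^ 2 ≤ R ^ 2 := by nlinarith
      calc (x - z) ^ 2 * (R⁻¹) ^ 2 ≤ R ^ 2 * (R⁻¹)^2 := by nlinarith [sq_nonneg R⁻¹]
        _ = 1 := by field_simp
    rw [hg]; simp only; linarith
  have hg1 : ∀ x ∈ Icc 0 R, x ∉ Ioo (z - η) (z + η) → g x ≤ r1 := by
    intro x _ hx
    simp only [mem_Ioo, not_and_or, not_lt] at hx
    have : η ^ 2 ≤ (x - z) ^ 2 := by
      rcases hx with h | h
      · nlinarith
      · nlinarith
    rw [hg, hr1]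
    simp only
    rw [mul_pow, mul_pow]
    nlinarith [sq_nonneg R⁻¹]
  have hg2 : ∀ x ∈ Ioo (z - η/2) (z + η/2), r2 ≤ g x := by
    intro x hx
    simp only [mem_Ioo] at hx
    have : (x - z) ^ 2 ≤ (η/2) ^ 2 := by nlinarith [hx.1, hx.2]
    rw [hg, hr2]
    simp only
    rw [mul_pow, mul_pow]
    nlinarith [sq_nonneg R⁻¹]
  -- integral equality for powers of g
  have hpolyeq : ∀ n : ℕ, ∫ x, g x ^ n ∂μ = ∫ x, g x ^ n ∂ρ := by
    intro n
    have := integral_poly_eq hconcμ hconcρ hmom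
      ((1 - ((Polynomial.X - Polynomial.C z) * Polynomial.C R⁻¹) ^ 2) ^ n)
    simpa [hg] using this
  have hint : ∀ (m : Measure ℝ) [IsFiniteMeasure m], m (Icc 0 R)ᶜ = 0 →
      ∀ n : ℕ, Integrable (fun x => g x ^ n) m := by
    intro m _ hconc n
    have := integrable_poly hconc ((1 - ((Polynomial.X - Polynomial.C z) * Polynomial.C R⁻¹) ^ 2) ^ n)
    convert this using 2 with x
    simp [hg]
  obtain ⟨n, hn⟩ := geom_exists (M := (μ univ).toReal) hr1nn hr12 hδr
  -- upper estimate for μ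
  have hup : ∫ x, g x ^ n ∂μ ≤ r1 ^ n * (μ univ).toReal := by
    have hae2 : ∀ᵐ x ∂μ, x ∉ Ioo (z - η) (z + η) := by
      rw [ae_iff]; simp only [not_not]; exact hhole
    have hb : ∀ᵐ x ∂μ, g x ^ n ≤ r1 ^ n := by
      filter_upwards [ae_mem_Icc hconcμ, hae2] with x h1 h2
      exact pow_le_pow_left₀ (hgK x h1) (hg1 x h1 h2) n
    calc ∫ x, g x ^ n ∂μ ≤ ∫ _, r1 ^ n ∂μ :=
          integral_mono_ae (hint μ hconcμ n) (integrable_const _) hb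
      _ = r1 ^ n * (μ univ).toReal := by rw [integral_const, smul_eq_mul, measureReal_def]; ring
  -- lower estimate for ρ
  have hlow : r2 ^ n * δr ≤ ∫ x, g x ^ n ∂ρ := by
    have hnn : 0 ≤ᵐ[ρ] fun x => g x ^ n := by
      filter_upwards [ae_mem_Icc hconcρ] with x h1
      exact pow_nonneg (hgK x h1) n
    calc r2 ^ n * δr = ∫ _ in Ioo (z - η/2) (z + η/2), r2 ^ n ∂ρ := by
          rw [setIntegral_const, smul_eq_mul, measureReal_def]; ring
      _ ≤ ∫ x in Ioo (z - η/2) (z + η/2), g x ^ n ∂ρ := by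
          refine setIntegral_mono_on (integrableOn_const (measure_ne_top _ _))
            ((hint ρ hconcρ n).integrableOn) measurableSet_Ioo ?_
          intro x hx
          exact pow_le_pow_left₀ (by nlinarith [hg2 x hx, sq_nonneg (η/2 * R⁻¹)] : (0:ℝ) ≤ r2) (hg2 x hx) n
      _ ≤ ∫ x, g x ^ n ∂ρ := setIntegral_le_integral (hint ρ hconcρ n) hnn
  rw [hpolyeq n] at hup
  nlinarith
end Bridge

theorem stmt9 (a : ℕ → ℝ) (μ ν : Measure ℝ) (κ : ℕ) (hκ : 2 ≤ κ)
    (hμ : IsRepMeas a μ)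
    (hν : IsRepMeas (fun n => a n ^ (1 / (κ : ℝ))) ν)
    (θ1 θ2 θ3 : ℝ) (h0 : 0 ≤ θ1) (h12 : θ1 < θ2) (h23 : θ2 ≤ θ3)
    (hθ3 : IsLUB (msupport μ) θ3)
    (hhole : μ (Set.Ioo θ1 θ2) = 0)
    (α β γ αd βd : ℝ)
    (hα : α = θ1 / θ3 * θ3 ^ (1 / (κ : ℝ)))
    (hβ : β = θ2 ^ (1 / (κ : ℝ)))
    (hγ : γ = θ3 ^ (1 / (κ : ℝ)))
    (hαd : αd = θ2 / θ3 * θ3 ^ (1 / (κ : ℝ)))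
    (hβd : βd = θ1 ^ (1 / (κ : ℝ)))
    (hcond : (βd < αd ∨ (βd ≤ αd ∧ 3 ≤ κ) ∨ (βd = αd ∧ β ∈ msupport ν)) ∨
      (γ / β * α < αd ∧ β ∈ msupport ν)) :
    ν (Set.Ioo α β) = 0 := by
  classical
  obtain ⟨ha, hμ0, hμm⟩ := hμ
  obtain ⟨-, hν0, hνm⟩ := hν
  haveI : IsFiniteMeasure μ := by
    constructor
    have h := hμm 0
    simp only [pow_zero, ENNReal.ofReal_one, lintegral_one] at h
    rw [h]; exact ENNReal.ofReal_lt_top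
  haveI : IsFiniteMeasure ν := by
    constructor
    have h := hνm 0
    simp only [pow_zero, ENNReal.ofReal_one, lintegral_one] at h
    rw [h]; exact ENNReal.ofReal_lt_top
  -- basic positivity
  have hθ2pos : 0 < θ2 := lt_of_le_of_lt h0 h12
  have hθ3pos : 0 < θ3 := lt_of_lt_of_le hθ2pos h23
  have hκ0 : κ ≠ 0 := by omega
  have h1κ : (1:ℝ)/(κ:ℝ) = ((κ:ℝ))⁻¹ := one_div _
  have hγpos : 0 < γ := hγ ▸ Real.rpow_pos_of_pos hθ3pos _
  have hβpos : 0 < β := hβ ▸ Real.rpow_pos_of_pos hθ2pos _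
  have hβdnn : 0 ≤ βd := hβd ▸ Real.rpow_nonneg h0 _
  have hγκ : γ ^ κ = θ3 := by rw [hγ, h1κ]; exact Real.rpow_inv_natCast_pow hθ3pos.le hκ0
  have hβκ : β ^ κ = θ2 := by rw [hβ, h1κ]; exact Real.rpow_inv_natCast_pow hθ2pos.le hκ0
  have hβdκ : βd ^ κ = θ1 := by rw [hβd, h1κ]; exact Real.rpow_inv_natCast_pow h0 hκ0
  have hβγ : β ≤ γ := by
    rw [hβ, hγ]
    exact Real.rpow_le_rpow hθ2pos.le h23 (by positivity)
  have hκ1 : κ - 1 + 1 = κ := by omega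
  have hγsucc : γ * γ ^ (κ - 1) = θ3 := by
    rw [← pow_succ', hκ1, hγκ]
  have hαγ : α * γ ^ (κ - 1) = θ1 := by
    rw [hα, ← hγ]
    have : θ1 / θ3 * γ * γ ^ (κ - 1) = θ1 / θ3 * (γ * γ ^ (κ - 1)) := by ring
    rw [this, hγsucc]
    field_simp
  have hαdγ : αd * γ ^ (κ - 1) = θ2 := by
    rw [hαd, ← hγ]
    have : θ2 / θ3 * γ * γ ^ (κ - 1) = θ2 / θ3 * (γ * γ ^ (κ - 1)) := by ring
    rw [this, hγsucc]
    field_simp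
  -- support facts for μ
  have hθ3supp : θ3 ∈ msupport μ := isLUB_mem_msupport hθ3
  have hμnn : ∀ y ∈ msupport μ, 0 ≤ y := by
    intro y hy
    by_contra hc
    push_neg at hc
    have := hy (Set.Iio 0) isOpen_Iio hc
    rw [hμ0] at this
    exact lt_irrefl 0 this
  have hconcμ : μ (Icc 0 θ3)ᶜ = 0 :=
    null_compl_of_msupport_subset (fun y hy => ⟨hμnn y hy, hθ3.1 hy⟩)
  have hnotIoo : ∀ z ∈ msupport μ, z ∉ Ioo θ1 θ2 := by
    intro z hz hmem
    have := hz _ isOpen_Ioo hmem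
    rw [hhole] at this
    exact lt_irrefl 0 this
  -- moment bounds
  have haup : ∀ n, a n ≤ θ3 ^ n * (μ univ).toReal := by
    intro n
    have h := moment_upper hconcμ n
    rw [hμm n] at h
    exact ennreal_le_mul (measure_ne_top _ _) (pow_nonneg hθ3pos.le n) h
  set b : ℕ → ℝ := fun n => a n ^ (1/(κ:ℝ)) with hb
  have hbnn : ∀ n, 0 ≤ b n := fun n => Real.rpow_nonneg (ha n) _
  have hMν : (0:ℝ) ≤ (μ univ).toReal ^ ((1:ℝ)/(κ:ℝ)) :=
    Real.rpow_nonneg ENNReal.toReal_nonneg _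
  have hθ3pow : ∀ n : ℕ, (θ3 ^ n) ^ ((1:ℝ)/(κ:ℝ)) = γ ^ n := by
    intro n
    rw [hγ, ← Real.rpow_natCast θ3 n, ← Real.rpow_mul hθ3pos.le, mul_comm,
      Real.rpow_mul hθ3pos.le, Real.rpow_natCast]
  have hbup : ∀ n, b n ≤ γ ^ n * ((μ univ).toReal ^ ((1:ℝ)/(κ:ℝ))) := by
    intro n
    calc b n ≤ (θ3 ^ n * (μ univ).toReal) ^ ((1:ℝ)/(κ:ℝ)) :=
          Real.rpow_le_rpow (ha n) (haup n) (by positivity)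
      _ = (θ3 ^ n) ^ ((1:ℝ)/(κ:ℝ)) * (μ univ).toReal ^ ((1:ℝ)/(κ:ℝ)) :=
          Real.mul_rpow (pow_nonneg hθ3pos.le n) ENNReal.toReal_nonneg
      _ = γ ^ n * ((μ univ).toReal ^ ((1:ℝ)/(κ:ℝ))) := by rw [hθ3pow n]
  -- support of ν ⊆ [0, γ]
  have hνnn : ∀ y ∈ msupport ν, 0 ≤ y := by
    intro y hy
    by_contra hc
    push_neg at hc
    have := hy (Set.Iio 0) isOpen_Iio hc
    rw [hν0] at this
    exact lt_irrefl 0 this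
  have hνub : ∀ y ∈ msupport ν, y ≤ γ := by
    intro y hy
    by_contra hc
    push_neg at hc
    set c := (γ + y)/2 with hcdef
    have hc1 : γ < c := by rw [hcdef]; linarith
    have hc2 : c < y := by rw [hcdef]; linarith
    have hcpos : 0 < c := lt_trans hγpos hc1
    have hδ : 0 < ν (Ioi c) := hy _ isOpen_Ioi hc2
    have hδr : 0 < (ν (Ioi c)).toReal := ENNReal.toReal_pos hδ.ne' (measure_ne_top _ _)
    refine geom_contra (M := (μ univ).toReal ^ ((1:ℝ)/(κ:ℝ))) hγpos.le hc1 hδr (fun n => ?_)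
    have h1 : ENNReal.ofReal (c ^ n) * ν (Ioi c) ≤ ENNReal.ofReal (b n) :=
      le_of_le_of_eq (moment_lower (A := Ioi c) hcpos.le (fun x hx => mem_Ici.mpr (le_of_lt hx)) n) (hνm n)
    have h2 : ENNReal.ofReal (c ^ n) * ν (Ioi c) ≤
        ENNReal.ofReal (γ ^ n * ((μ univ).toReal ^ ((1:ℝ)/(κ:ℝ)))) :=
      h1.trans (ENNReal.ofReal_le_ofReal (hbup n))
    have h3 := ennreal_mul_le (measure_ne_top _ _)
      (mul_nonneg (pow_nonneg hγpos.le n) hMν) (pow_nonneg hcpos.le n) h2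
    calc (ν (Ioi c)).toReal * c ^ n = c ^ n * (ν (Ioi c)).toReal := mul_comm _ _
      _ ≤ γ ^ n * ((μ univ).toReal ^ ((1:ℝ)/(κ:ℝ))) := h3
      _ = ((μ univ).toReal ^ ((1:ℝ)/(κ:ℝ))) * γ ^ n := mul_comm _ _
  have hconcν : ν (Icc 0 γ)ᶜ = 0 :=
    null_compl_of_msupport_subset (fun y hy => ⟨hνnn y hy, hνub y hy⟩)
  -- γ ∈ msupport ν
  have hγsupp : γ ∈ msupport ν := by
    intro U hU hγU
    by_contra hcon
    have hU0 : ν U = 0 := le_zero_iff.mp (not_lt.mp hcon)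
    obtain ⟨ε0, hε0, hball⟩ := Metric.isOpen_iff.mp hU γ hγU
    set e := min ε0 γ with hedef
    have he : 0 < e := lt_min hε0 hγpos
    have heγ : e ≤ γ := min_le_right _ _
    have heε : e ≤ ε0 := min_le_left _ _
    have hcut : ν (Ioi (γ - e)) = 0 := by
      refine measure_mono_null (t := Ioo (γ - e) (γ + e) ∪ (Icc 0 γ)ᶜ) ?_
        (measure_union_null ?_ hconcν)
      · intro x hx
        simp only [mem_Ioi] at hx
        rcases le_or_gt x γ with h | h
        · exact Or.inl ⟨hx, by linarith⟩
        · exact Or.inr (by simp only [mem_compl_iff, mem_Icc, not_and_or, not_le]; right; exact h)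
      · refine measure_mono_null (fun x hx => hball ?_) hU0
        rw [Real.ball_eq_Ioo]
        simp only [mem_Ioo] at hx ⊢
        exact ⟨by linarith [hx.1], by linarith [hx.2]⟩
    have hγe : 0 ≤ γ - e := by linarith
    have hconc2 : ν (Icc 0 (γ - e))ᶜ = 0 := by
      refine measure_mono_null (t := Iio 0 ∪ Ioi (γ - e)) ?_ (measure_union_null hν0 hcut)
      intro x hx
      simp only [mem_compl_iff, mem_Icc, not_and_or, not_le] at hx
      rcases hx with h | h
      · exact Or.inl h
      · exact Or.inr h
    set u := γ - e/2 with hudef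
    have hu1 : γ - e < u := by rw [hudef]; linarith
    have hu2 : u < γ := by rw [hudef]; linarith
    have hupos : 0 < u := by rw [hudef]; linarith
    set θ' := u ^ κ with hθ'def
    have hθ'3 : θ' < θ3 := by
      rw [hθ'def, ← hγκ]
      exact pow_lt_pow_left₀ hu2 hupos.le hκ0
    have hθ'nn : 0 ≤ θ' := pow_nonneg hupos.le κ
    have hδμ : 0 < μ (Ioi θ') := hθ3supp _ isOpen_Ioi hθ'3
    have hδμr : 0 < (μ (Ioi θ')).toReal := ENNReal.toReal_pos hδμ.ne' (measure_ne_top _ _)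
    have hlowa : ∀ n, θ' ^ n * (μ (Ioi θ')).toReal ≤ a n := by
      intro n
      have h1 : ENNReal.ofReal (θ' ^ n) * μ (Ioi θ') ≤ ENNReal.ofReal (a n) :=
        le_of_le_of_eq (moment_lower (A := Ioi θ') hθ'nn (fun x hx => mem_Ici.mpr (le_of_lt hx)) n) (hμm n)
      exact ennreal_mul_le (measure_ne_top _ _) (ha n) (pow_nonneg hθ'nn n) h1
    have hθ'pow : ∀ n : ℕ, (θ' ^ n) ^ ((1:ℝ)/(κ:ℝ)) = u ^ n := by
      intro n
      rw [hθ'def, ← pow_mul, mul_comm κ n, pow_mul, h1κ]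
      exact Real.pow_rpow_inv_natCast (pow_nonneg hupos.le n) hκ0
    have hlowb : ∀ n, u ^ n * ((μ (Ioi θ')).toReal ^ ((1:ℝ)/(κ:ℝ))) ≤ b n := by
      intro n
      have h1 : (θ' ^ n * (μ (Ioi θ')).toReal) ^ ((1:ℝ)/(κ:ℝ)) ≤ b n :=
        Real.rpow_le_rpow (mul_nonneg (pow_nonneg hθ'nn n) ENNReal.toReal_nonneg)
          (hlowa n) (by positivity)
      calc u ^ n * ((μ (Ioi θ')).toReal ^ ((1:ℝ)/(κ:ℝ)))
          = (θ' ^ n) ^ ((1:ℝ)/(κ:ℝ)) * ((μ (Ioi θ')).toReal ^ ((1:ℝ)/(κ:ℝ))) := by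
            rw [hθ'pow n]
        _ = (θ' ^ n * (μ (Ioi θ')).toReal) ^ ((1:ℝ)/(κ:ℝ)) :=
            (Real.mul_rpow (pow_nonneg hθ'nn n) ENNReal.toReal_nonneg).symm
        _ ≤ b n := h1
    have hupb : ∀ n, b n ≤ (γ - e) ^ n * (ν univ).toReal := by
      intro n
      have h := moment_upper hconc2 n
      rw [hνm n] at h
      exact ennreal_le_mul (measure_ne_top _ _) (pow_nonneg hγe n) h
    refine geom_contra (M := (ν univ).toReal) (δ := (μ (Ioi θ')).toReal ^ ((1:ℝ)/(κ:ℝ))) hγe hu1 (Real.rpow_pos_of_pos hδμr _) (fun n => ?_)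
    calc (μ (Ioi θ')).toReal ^ ((1:ℝ)/(κ:ℝ)) * u ^ n
        = u ^ n * ((μ (Ioi θ')).toReal ^ ((1:ℝ)/(κ:ℝ))) := mul_comm _ _
      _ ≤ b n := hlowb n
      _ ≤ (γ - e) ^ n * (ν univ).toReal := hupb n
      _ = (ν univ).toReal * (γ - e) ^ n := mul_comm _ _
  -- the iterated product measure
  set ρ := prodIter ν κ with hρdef
  have hconcρ : ρ (Icc 0 θ3)ᶜ = 0 := by
    have := prodIter_conc hγpos.le hconcν κ
    rw [hγκ] at this
    exact this
  haveI : IsFiniteMeasure ρ := by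
    constructor
    rw [hρdef, prodIter_univ]
    exact ENNReal.pow_lt_top (measure_lt_top _ _)
  have hρ0 : ρ (Iio 0) = 0 := prodIter_neg hγpos.le hconcν κ
  have hνint : ∀ n, ∫⁻ x, ENNReal.ofReal x ^ n ∂ν = ENNReal.ofReal (b n) := by
    intro n
    rw [lint_pow_eq hν0 n]
    exact hνm n
  have hbaκ : ∀ n, b n ^ κ = a n := by
    intro n
    rw [hb]
    simp only
    rw [h1κ]
    exact Real.rpow_inv_natCast_pow (ha n) hκ0
  have hρm : ∀ n, ∫⁻ x, ENNReal.ofReal (x ^ n) ∂ρ = ENNReal.ofReal (a n) := by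
    intro n
    rw [← lint_pow_eq hρ0 n, hρdef, prodIter_lintegral hν0 n κ, hνint n,
      ← ENNReal.ofReal_pow (hbnn n), hbaκ n]
  have hμint := integral_pow_eq ha hμ0 hμm
  have hρint := integral_pow_eq ha hρ0 hρm
  have hmom : ∀ n : ℕ, ∫ x, x ^ n ∂μ = ∫ x, x ^ n ∂ρ := fun n => by
    rw [hμint n, hρint n]
  -- products of support points of ν lie in the support of μ
  have hprodIcc : ∀ l : List ℝ, (∀ x ∈ l, x ∈ msupport ν) → l.prod ∈ Icc 0 (γ ^ l.length) := by
    intro l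
    induction l with
    | nil => intro _; simp
    | cons x t ih =>
        intro hl
        have hx := hl x List.mem_cons_self
        have ht := ih (fun y hy => hl y (List.mem_cons_of_mem _ hy))
        simp only [List.prod_cons, List.length_cons, mem_Icc] at ht ⊢
        constructor
        · exact mul_nonneg (hνnn x hx) ht.1
        · rw [pow_succ']
          exact mul_le_mul (hνub x hx) ht.2 ht.1 hγpos.le
  have hkey : ∀ l : List ℝ, l.length = κ → (∀ x ∈ l, x ∈ msupport ν) →
      l.prod ∈ msupport μ := by
    intro l hlen hl
    have hz := hprodIcc l hl
    rw [hlen, hγκ] at hz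
    refine mem_msupport_of_moments μ ρ hθ3pos hconcμ hconcρ hmom hz ?_
    intro U hU hzU
    have := prodIter_pos l hl U hU hzU
    rw [hlen] at this
    rwa [← hρdef] at this
  -- now assume a support point of ν in (α, β)
  by_contra hne
  obtain ⟨s, hsIoo, hs⟩ := exists_mem_msupport hne
  obtain ⟨hαs, hsβ⟩ := hsIoo
  have hs0 : 0 ≤ s := hνnn s hs
  have hsγ : s < γ := lt_of_lt_of_le hsβ hβγ
  -- z1 = s * γ^(κ-1)
  have hz1 : s * γ ^ (κ - 1) ∈ msupport μ := by
    have hlen : (s :: List.replicate (κ-1) γ).length = κ := by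
      simp only [List.length_cons, List.length_replicate]; omega
    have hmem : ∀ x ∈ (s :: List.replicate (κ-1) γ), x ∈ msupport ν := by
      intro x hx
      rcases List.mem_cons.mp hx with rfl | hx
      · exact hs
      · rw [List.eq_of_mem_replicate hx]; exact hγsupp
    have := hkey _ hlen hmem
    simpa [List.prod_cons, List.prod_replicate] using this
  have hθ1z1 : θ1 < s * γ ^ (κ - 1) := by
    rw [← hαγ]
    exact mul_lt_mul_of_pos_right hαs (pow_pos hγpos _)
  have hz1θ2 : θ2 ≤ s * γ ^ (κ - 1) := by
    by_contra hcon
    push_neg at hcon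
    exact hnotIoo _ hz1 ⟨hθ1z1, hcon⟩
  have hαd_le_s : αd ≤ s := by
    rw [← hαdγ] at hz1θ2
    exact le_of_mul_le_mul_right hz1θ2 (pow_pos hγpos _)
  have hαdpos : 0 < αd := by
    rw [hαd]
    exact mul_pos (div_pos hθ2pos hθ3pos) (Real.rpow_pos_of_pos hθ3pos _)
  have hspos : 0 < s := lt_of_lt_of_le hαdpos hαd_le_s
  -- z2 = s^κ
  have hz2 : s ^ κ ∈ msupport μ := by
    have hlen : (List.replicate κ s).length = κ := by simp
    have hmem : ∀ x ∈ List.replicate κ s, x ∈ msupport ν := by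
      intro x hx
      rw [List.eq_of_mem_replicate hx]; exact hs
    have := hkey _ hlen hmem
    simpa [List.prod_replicate] using this
  have hz2θ2 : s ^ κ < θ2 := by
    rw [← hβκ]
    exact pow_lt_pow_left₀ hsβ hs0 hκ0
  have hz2θ1 : s ^ κ ≤ θ1 := by
    by_contra hcon
    push_neg at hcon
    exact hnotIoo _ hz2 ⟨hcon, hz2θ2⟩
  have hsβd : s ≤ βd := by
    rw [← hβdκ] at hz2θ1
    exact (pow_le_pow_iff_left₀ hs0 hβdnn hκ0).mp hz2θ1
  have hαdβd : αd ≤ βd := le_trans hαd_le_s hsβd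
  have hθ2θ3 : θ2 < θ3 := by
    have h1 : αd < γ := lt_of_le_of_lt hαd_le_s hsγ
    rw [hαd, ← hγ] at h1
    have h2 : θ2/θ3 < 1 := by
      by_contra hcon
      push_neg at hcon
      nlinarith
    exact (div_lt_one hθ3pos).mp h2
  have hβγ' : β < γ := by
    rw [hβ, hγ]
    exact Real.rpow_lt_rpow hθ2pos.le hθ2θ3 (by positivity)
  rcases hcond with (hc1 | ⟨hc2, hκ3⟩ | ⟨hc3, hβsupp⟩) | ⟨hcb, hβsupp⟩
  · exact absurd hc1 (not_lt.mpr hαdβd)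
  · -- βd ≤ αd and κ ≥ 3
    have hsαd : s = αd := le_antisymm (hsβd.trans hc2) hαd_le_s
    have hsβd' : s = βd := le_antisymm hsβd (hc2.trans hαd_le_s)
    have hθ1s : θ1 = s ^ κ := by rw [← hβdκ, hsβd']
    have hz3 : s * (s * γ ^ (κ - 2)) ∈ msupport μ := by
      have hlen : (s :: s :: List.replicate (κ-2) γ).length = κ := by
        simp only [List.length_cons, List.length_replicate]; omega
      have hmem : ∀ x ∈ (s :: s :: List.replicate (κ-2) γ), x ∈ msupport ν := by
        intro x hx
        rcases List.mem_cons.mp hx with rfl | hx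
        · exact hs
        rcases List.mem_cons.mp hx with rfl | hx
        · exact hs
        · rw [List.eq_of_mem_replicate hx]; exact hγsupp
      have := hkey _ hlen hmem
      simpa [List.prod_cons, List.prod_replicate] using this
    have hκ2 : κ - 2 ≠ 0 := by omega
    have hlow3 : θ1 < s * (s * γ ^ (κ - 2)) := by
      rw [hθ1s]
      have h1 : s ^ (κ - 2) < γ ^ (κ - 2) := pow_lt_pow_left₀ hsγ hs0 hκ2
      have h2 : s ^ κ = s * (s * s ^ (κ - 2)) := by
        have h2' : s * (s * s ^ (κ - 2)) = s ^ (κ - 2) * s ^ 2 := by ring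
        rw [h2', ← pow_add, show κ - 2 + 2 = κ from by omega]
      rw [h2]
      have h3 : s * s ^ (κ - 2) < s * γ ^ (κ - 2) := mul_lt_mul_of_pos_left h1 hspos
      exact mul_lt_mul_of_pos_left h3 hspos
    have hup3 : s * (s * γ ^ (κ - 2)) < θ2 := by
      rw [hsαd, hαd, ← hγ]
      have hgk : γ * (γ * γ ^ (κ - 2)) = θ3 := by
        have h2' : γ * (γ * γ ^ (κ - 2)) = γ ^ (κ - 2) * γ ^ 2 := by ring
        rw [h2', ← pow_add, show κ - 2 + 2 = κ from by omega, hγκ]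
      have heq : (θ2/θ3*γ) * ((θ2/θ3*γ) * γ ^ (κ - 2))
          = (θ2/θ3)^2 * (γ * (γ * γ ^ (κ - 2))) := by ring
      rw [heq, hgk]
      have h5 : θ2/θ3 < 1 := (div_lt_one hθ3pos).mpr hθ2θ3
      have h6 : (θ2/θ3)^2 * θ3 = θ2 * (θ2/θ3) := by field_simp
      rw [h6]
      nlinarith
    exact hnotIoo _ hz3 ⟨hlow3, hup3⟩
  · -- βd = αd and β ∈ supp ν
    have hsαd : s = αd := le_antisymm (hsβd.trans (le_of_eq hc3)) hαd_le_s
    have hbs : βd ≤ s := by rw [hc3]; exact hαd_le_s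
    have hsβd' : s = βd := le_antisymm hsβd hbs
    have hθ1s : θ1 = s ^ κ := by rw [← hβdκ, hsβd']
    have hz4 : s * (β * γ ^ (κ - 2)) ∈ msupport μ := by
      have hlen : (s :: β :: List.replicate (κ-2) γ).length = κ := by
        simp only [List.length_cons, List.length_replicate]; omega
      have hmem : ∀ x ∈ (s :: β :: List.replicate (κ-2) γ), x ∈ msupport ν := by
        intro x hx
        rcases List.mem_cons.mp hx with rfl | hx
        · exact hs
        rcases List.mem_cons.mp hx with rfl | hx
        · exact hβsupp
        · rw [List.eq_of_mem_replicate hx]; exact hγsupp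
      have := hkey _ hlen hmem
      simpa [List.prod_cons, List.prod_replicate] using this
    have hlow4 : θ1 < s * (β * γ ^ (κ - 2)) := by
      rw [hθ1s]
      have h2 : s ^ κ = s * (s * s ^ (κ - 2)) := by
        have h2' : s * (s * s ^ (κ - 2)) = s ^ (κ - 2) * s ^ 2 := by ring
        rw [h2', ← pow_add, show κ - 2 + 2 = κ from by omega]
      rw [h2]
      have h3 : s * s ^ (κ - 2) < β * γ ^ (κ - 2) :=
        mul_lt_mul hsβ (pow_le_pow_left₀ hs0 hsγ.le _) (pow_pos hspos _) hβpos.le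
      exact mul_lt_mul_of_pos_left h3 hspos
    have hup4 : s * (β * γ ^ (κ - 2)) < θ2 := by
      rw [hsαd, hαd, ← hγ]
      have hg1' : γ * γ ^ (κ - 2) = γ ^ (κ - 1) := by
        have hadd : κ - 2 + 1 = κ - 1 := by omega
        rw [← pow_succ', hadd]
      have heq : (θ2/θ3*γ) * (β * γ ^ (κ - 2)) = θ2/θ3 * β * (γ * γ ^ (κ - 2)) := by ring
      rw [heq, hg1']
      have h7 : β * γ ^ (κ - 1) < γ * γ ^ (κ - 1) :=
        mul_lt_mul_of_pos_right hβγ' (pow_pos hγpos _)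
      have h9 : β * γ ^ (κ - 1) < θ3 := by rw [← hγsucc]; exact h7
      rw [div_mul_eq_mul_div, div_mul_eq_mul_div, div_lt_iff₀ hθ3pos]
      calc θ2 * β * γ ^ (κ - 1) = θ2 * (β * γ ^ (κ - 1)) := by ring
        _ < θ2 * θ3 := mul_lt_mul_of_pos_left h9 hθ2pos
    exact hnotIoo _ hz4 ⟨hlow4, hup4⟩
  · -- case (b)
    have hb2 : θ1 * γ < θ2 * β := by
      have h1 : (γ/β*α) * (β * γ ^ (κ - 1)) < αd * (β * γ ^ (κ - 1)) :=
        mul_lt_mul_of_pos_right hcb (mul_pos hβpos (pow_pos hγpos _))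
      have e1 : (γ/β*α) * (β * γ ^ (κ - 1)) = (α * γ ^ (κ - 1)) * γ := by
        field_simp
      have e2 : αd * (β * γ ^ (κ - 1)) = (αd * γ ^ (κ - 1)) * β := by ring
      rw [e1, e2, hαγ, hαdγ] at h1
      exact h1
    set v : ℕ → ℝ := fun j => s * (β ^ j * γ ^ (κ - 1 - j)) with hv
    have hvmem : ∀ j, j ≤ κ - 1 → v j ∈ msupport μ := by
      intro j hj
      have hlen : (s :: (List.replicate j β ++ List.replicate (κ-1-j) γ)).length = κ := by
        simp only [List.length_cons, List.length_append, List.length_replicate]; omega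
      have hmem : ∀ x ∈ (s :: (List.replicate j β ++ List.replicate (κ-1-j) γ)),
          x ∈ msupport ν := by
        intro x hx
        rcases List.mem_cons.mp hx with rfl | hx
        · exact hs
        rcases List.mem_append.mp hx with hx | hx
        · rw [List.eq_of_mem_replicate hx]; exact hβsupp
        · rw [List.eq_of_mem_replicate hx]; exact hγsupp
      have := hkey _ hlen hmem
      simpa [List.prod_cons, List.prod_append, List.prod_replicate, hv] using this
    have hv0 : θ2 ≤ v 0 := by
      have he : v 0 = s * γ ^ (κ - 1) := by simp [hv]
      rw [he]; exact hz1θ2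
    have hvlast : v (κ-1) < θ2 := by
      have he : v (κ-1) = s * β ^ (κ-1) := by simp [hv]
      rw [he, ← hβκ]
      calc s * β ^ (κ-1) < β * β ^ (κ-1) := mul_lt_mul_of_pos_right hsβ (pow_pos hβpos _)
        _ = β ^ κ := by rw [← pow_succ', hκ1]
    have hex : ∃ j, v j < θ2 := ⟨κ-1, hvlast⟩
    set j0 := Nat.find hex with hj0def
    have hj0le : j0 ≤ κ - 1 := Nat.find_min' hex hvlast
    have hj0spec : v j0 < θ2 := Nat.find_spec hex
    have hj0ne : j0 ≠ 0 := by
      intro h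
      rw [h] at hj0spec
      exact absurd hj0spec (not_lt.mpr hv0)
    obtain ⟨m, hm⟩ := Nat.exists_eq_succ_of_ne_zero hj0ne
    have hmlt : θ2 ≤ v m := by
      have := Nat.find_min hex (m := m) (by omega)
      exact not_lt.mp this
    have hvm1θ1 : v (m+1) ≤ θ1 := by
      by_contra hcon
      push_neg at hcon
      refine hnotIoo _ (hvmem (m+1) (by omega)) ⟨hcon, ?_⟩
      rw [hm] at hj0spec
      exact hj0spec
    have hrel : v m * β = v (m+1) * γ := by
      have h1 : κ - 1 - m = (κ - 1 - (m+1)) + 1 := by omega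
      rw [hv]
      simp only
      rw [h1, pow_succ, pow_succ]
      ring
    have e1 : v (m+1) * γ ≤ θ1 * γ := mul_le_mul_of_nonneg_right hvm1θ1 hγpos.le
    have e2 : θ2 * β ≤ v m * β := mul_le_mul_of_nonneg_right hmlt hβpos.le
    linarith
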